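/- Lemma (Case (i), lower bound). Suppose Assumptions 1 and 2 hold, let E ∈ ℝ, and let e* ∈ D(E) minimize d_l + d_u over D(E). If E + δ·Σ_j p̲_j ≥ Σ_j e̲'_j, then Σ_j max(e̲'_j, e*_j + δ·p̲_j) = E + δ·Σ_j p̲_j; equivalently, e*_j + δ·p̲_j ≥ e̲'_j for every j. -/
import Mathlib


open Finset

/-- helper: monotonicity of x ↦ x - min x c -/
lemma du_mono (x y c : ℝ) (hxy : x ≤ y) : x - min x c ≤ y - min y c := by
  rcases le_total x c with h1 | h1 <;> rcases le_total y c with h2 | h2 <;>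
    simp [min_eq_left, min_eq_right, *] <;> linarith

/-- Lemma 2(a) (Case (i), lower bound). -/
theorem case_i_lower_bound
    (N : ℕ) (hN : 1 ≤ N) (δ : ℝ) (hδ : 0 < δ)
    (plb pub elb eub elb' eub' : Fin N → ℝ)
    (hp : ∀ j, plb j ≤ pub j) (he : ∀ j, elb j ≤ eub j)
    (he' : ∀ j, elb' j ≤ eub' j)
    -- Assumption 1 (consistency of constraints)
    (hA1 : ∀ j, ∀ e : ℝ, elb j ≤ e → e ≤ eub j →
      max (elb' j) (e + δ * plb j) ≤ min (eub' j) (e + δ * pub j))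
    -- Assumption 2(a)
    (hA2a : ∀ j, ∃ e : ℝ, elb j ≤ e ∧ e ≤ eub j ∧
      elb' j ≤ e + δ * plb j ∧ e + δ * pub j ≤ eub' j)
    -- Assumption 2(b)
    (hA2b : ∀ j, elb j + δ * plb j ≤ elb' j ∧ eub' j ≤ eub j + δ * pub j)
    (E : ℝ) (estar : Fin N → ℝ)
    -- e* ∈ D(E)
    (hmem : (∀ j, elb j ≤ estar j ∧ estar j ≤ eub j) ∧ ∑ j, estar j = E)
    -- e* minimizes d_l + d_u over D(E)
    (hmin : ∀ e : Fin N → ℝ,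
      ((∀ j, elb j ≤ e j ∧ e j ≤ eub j) ∧ ∑ j, e j = E) →
      ((∑ j, (max (estar j + δ * plb j) (elb' j) - (estar j + δ * plb j))) +
       (∑ j, ((estar j + δ * pub j) - min (estar j + δ * pub j) (eub' j)))) ≤
      ((∑ j, (max (e j + δ * plb j) (elb' j) - (e j + δ * plb j))) +
       (∑ j, ((e j + δ * pub j) - min (e j + δ * pub j) (eub' j)))))
    -- case hypothesis
    (hcase : E + δ * ∑ j, plb j ≥ ∑ j, elb' j) :
    (∑ j, max (elb' j) (estar j + δ * plb j) = E + δ * ∑ j, plb j) ∧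
    (∀ j, estar j + δ * plb j ≥ elb' j) := by
  obtain ⟨hbox, hsum⟩ := hmem
  have key : ∀ j, elb' j ≤ estar j + δ * plb j := by
    by_contra hcon
    push_neg at hcon
    obtain ⟨j, hj⟩ := hcon
    have hsum' : ∑ i, elb' i ≤ ∑ i, (estar i + δ * plb i) := by
      rw [Finset.sum_add_distrib, ← Finset.mul_sum, hsum]
      exact hcase
    have hkex : ∃ k, elb' k < estar k + δ * plb k := by
      by_contra hk'
      push_neg at hk'
      have : ∑ i, (estar i + δ * plb i) < ∑ i, elb' i :=
        Finset.sum_lt_sum (fun i _ => hk' i) ⟨j, Finset.mem_univ j, hj⟩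
      linarith
    obtain ⟨k, hk⟩ := hkex
    have hjk : j ≠ k := by
      intro h; rw [h] at hj; linarith
    set ε : ℝ := min (elb' j - δ * plb j - estar j) (estar k + δ * plb k - elb' k) with hεdef
    have hεpos : 0 < ε := lt_min (by linarith) (by linarith)
    have hε1 : estar j + ε + δ * plb j ≤ elb' j := by
      have := min_le_left (elb' j - δ * plb j - estar j) (estar k + δ * plb k - elb' k)
      rw [← hεdef] at this; linarith
    have hε2 : elb' k ≤ estar k - ε + δ * plb k := by
      have := min_le_right (elb' j - δ * plb j - estar j) (estar k + δ * plb k - elb' k)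
      rw [← hεdef] at this; linarith
    set e : Fin N → ℝ := fun i => if i = j then estar j + ε else if i = k then estar k - ε else estar i with hedef
    have hej : e j = estar j + ε := by simp [hedef]
    have hek : e k = estar k - ε := by simp [hedef, (Ne.symm hjk)]
    have heo : ∀ i, i ≠ j → i ≠ k → e i = estar i := by
      intro i h1 h2; simp [hedef, h1, h2]
    -- bounds from A2a at j
    obtain ⟨e0, he0l, he0u, he0a, he0b⟩ := hA2a j
    have hfeas : (∀ i, elb i ≤ e i ∧ e i ≤ eub i) ∧ ∑ i, e i = E := by
      constructor
      · intro i
        by_cases hij : i = j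
        · subst hij
          rw [hej]
        -- estar i + ε ≤ elb' i - δ plb i ≤ e0 ≤ eub i
          refine ⟨by linarith [(hbox i).1], by linarith⟩
        · by_cases hik : i = k
          · subst hik
            rw [hek]
            refine ⟨?_, by linarith [(hbox i).2]⟩
            have := (hA2b i).1
            linarith
          · rw [heo i hij hik]; exact hbox i
      · have hcongr : ∀ i ∈ Finset.univ, e i =
            estar i + ((if i = j then ε else 0) + (if i = k then -ε else 0)) := by
          intro i _
          by_cases hij : i = j
          · subst hij; rw [hej, if_pos rfl, if_neg hjk]; ring
          · by_cases hik : i = k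
            · subst hik; rw [hek, if_neg hij, if_pos rfl]; ring
            · rw [heo i hij hik, if_neg hij, if_neg hik]; ring
        rw [Finset.sum_congr rfl hcongr, Finset.sum_add_distrib, Finset.sum_add_distrib, hsum]
        rw [Finset.sum_ite_eq' Finset.univ j (fun _ => ε),
            Finset.sum_ite_eq' Finset.univ k (fun _ => (-ε : ℝ))]
        simp
    have hmin' := hmin e hfeas
    -- d_l sum equality
    have hdl : (∑ i, (max (e i + δ * plb i) (elb' i) - (e i + δ * plb i))) =
        (∑ i, (max (estar i + δ * plb i) (elb' i) - (estar i + δ * plb i))) - ε := by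
      have hcongr : ∀ i ∈ Finset.univ,
          (max (e i + δ * plb i) (elb' i) - (e i + δ * plb i)) =
          (max (estar i + δ * plb i) (elb' i) - (estar i + δ * plb i)) -
            (if i = j then ε else 0) := by
        intro i _
        by_cases hij : i = j
        · subst hij
          rw [hej, if_pos rfl,
            max_eq_right (by linarith : estar i + ε + δ * plb i ≤ elb' i),
            max_eq_right (le_of_lt hj)]
          ring
        · by_cases hik : i = k
          · subst hik
            rw [hek, if_neg hij,
              max_eq_left (by linarith : elb' i ≤ estar i - ε + δ * plb i),
              max_eq_left (le_of_lt hk)]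
            ring
          · rw [heo i hij hik, if_neg hij]; ring
      rw [Finset.sum_congr rfl hcongr, Finset.sum_sub_distrib,
        Finset.sum_ite_eq' Finset.univ j (fun _ => ε)]
      simp
    -- d_u sum inequality
    have hdu : (∑ i, ((e i + δ * pub i) - min (e i + δ * pub i) (eub' i))) ≤
        (∑ i, ((estar i + δ * pub i) - min (estar i + δ * pub i) (eub' i))) := by
      apply Finset.sum_le_sum
      intro i _
      by_cases hij : i = j
      · subst hij
        rw [hej]
        -- e_j + δ pub ≤ eub', so term = 0 ≤ term(estar)
        have h1 : estar i + ε + δ * pub i ≤ eub' i := by linarith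
        rw [min_eq_left h1]
        have : min (estar i + δ * pub i) (eub' i) ≤ estar i + δ * pub i :=
          min_le_left _ _
        linarith
      · by_cases hik : i = k
        · subst hik
          rw [hek]
          exact du_mono _ _ _ (by linarith)
        · rw [heo i hij hik]
    linarith
  refine ⟨?_, key⟩
  have : ∀ i ∈ Finset.univ, max (elb' i) (estar i + δ * plb i) = estar i + δ * plb i := by
    intro i _; exact max_eq_right (key i)
  rw [Finset.sum_congr rfl this, Finset.sum_add_distrib, ← Finset.mul_sum, hsum]
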